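/- For any Hermitian n×n matrix A and integer n ≥ 2, the quantity -9/8·Σ_i |a_{ni}|² + 7/8·|a_{nn}|² - 1/2·(tr A)·a_{nn} + 9/16·Σ_{i,j}|a_{ij}|² + ((16(n-1)+27)/(80(n-1)+144))·(tr A)² is nonnegative. -/

import Mathlib

open Finset

theorem hermitian_expr_nonneg (n : ℕ) (hn : 2 ≤ n)
    (A : Matrix (Fin n) (Fin n) ℂ) (hA : A.IsHermitian) :
    let ln : Fin n := ⟨n - 1, by omega⟩
    0 ≤ -9/8 * (∑ i, ‖A ln i‖ ^ 2) + 7/8 * ‖A ln ln‖ ^ 2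
        - 1/2 * (∑ i, (A i i).re) * (A ln ln).re
        + 9/16 * (∑ i, ∑ j, ‖A i j‖ ^ 2)
        + ((16 * ((n : ℝ) - 1) + 27) / (80 * ((n : ℝ) - 1) + 144))
          * (∑ i, (A i i).re) ^ 2 := by
  intro ln
  have hsym : ∀ i j, A i j = (starRingEnd ℂ) (A j i) := by
    intro i j
    have h := congrFun (congrFun hA i) j
    rw [Matrix.conjTranspose_apply] at h
    exact h.symm
  have hdiag : ∀ i, (A i i).im = 0 := by
    intro i
    exact Complex.conj_eq_iff_im.mp (hsym i i).symm
  have habs : ∀ i, ‖A i i‖ ^ 2 = (A i i).re ^ 2 := by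
    intro i
    rw [Complex.sq_norm, Complex.normSq_apply, hdiag]
    ring
  have habs_sym : ∀ i j, ‖A i j‖ = ‖A j i‖ := by
    intro i j
    rw [hsym i j, Complex.norm_conj]
  set t := ∑ i, (A i i).re with ht
  set d := (A ln ln).re with hd
  set R := ∑ i, ‖A ln i‖ ^ 2 with hRdef
  set S := ∑ i, ∑ j, ‖A i j‖ ^ 2 with hSdef
  set q := ∑ i ∈ Finset.univ.erase ln, (A i i).re ^ 2 with hqdef
  set m := (n : ℝ) - 1 with hmdef
  have hm : 1 ≤ m := by
    have : (2:ℝ) ≤ (n:ℝ) := by exact_mod_cast hn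
    simp only [hmdef]; linarith
  -- split S
  have hsplit : ‖A ln ln‖ ^ 2 ≤ R ∧
      S = R + ∑ i ∈ Finset.univ.erase ln, ∑ j, ‖A i j‖ ^ 2 := by
    constructor
    · exact Finset.single_le_sum (f := fun i => ‖A ln i‖ ^ 2)
        (fun i _ => by positivity) (Finset.mem_univ ln)
    · rw [hSdef, ← Finset.add_sum_erase _ _ (Finset.mem_univ ln)]
  have hinner : ∀ i ∈ Finset.univ.erase ln,
      ‖A i ln‖ ^ 2 + ‖A i i‖ ^ 2 ≤ ∑ j, ‖A i j‖ ^ 2 := by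
    intro i hi
    have hne : ln ≠ i := (Finset.ne_of_mem_erase hi).symm
    have hpair : ‖A i ln‖ ^ 2 + ‖A i i‖ ^ 2
        = ∑ j ∈ ({ln, i} : Finset (Fin n)), ‖A i j‖ ^ 2 := by
      rw [Finset.sum_pair hne]
    rw [hpair]
    exact Finset.sum_le_sum_of_subset_of_nonneg (Finset.subset_univ _)
      (fun j _ _ => by positivity)
  have hRsplit : ‖A ln ln‖ ^ 2
      + ∑ x ∈ Finset.univ.erase ln, ‖A ln x‖ ^ 2 = R :=
    Finset.add_sum_erase _ (fun i => ‖A ln i‖ ^ 2) (Finset.mem_univ ln)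
  have hd2 : ‖A ln ln‖ ^ 2 = d ^ 2 := habs ln
  have hrow : ∑ i ∈ Finset.univ.erase ln, ‖A i ln‖ ^ 2 = R - d ^ 2 := by
    have he : ∀ i ∈ Finset.univ.erase ln,
        ‖A i ln‖ ^ 2 = ‖A ln i‖ ^ 2 := by
      intro i _; rw [habs_sym]
    rw [Finset.sum_congr rfl he]
    rw [hd2] at hRsplit
    linarith
  have hdiagsum : ∑ i ∈ Finset.univ.erase ln, ‖A i i‖ ^ 2 = q := by
    rw [hqdef]
    exact Finset.sum_congr rfl (fun i _ => habs i)
  have hS : 2 * R - d ^ 2 + q ≤ S := by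
    have h1 : ∑ i ∈ Finset.univ.erase ln, (‖A i ln‖ ^ 2 + ‖A i i‖ ^ 2)
        ≤ ∑ i ∈ Finset.univ.erase ln, ∑ j, ‖A i j‖ ^ 2 :=
      Finset.sum_le_sum hinner
    rw [Finset.sum_add_distrib, hrow, hdiagsum] at h1
    rw [hsplit.2]
    linarith
  -- Cauchy-Schwarz on the other diagonal entries
  have htsplit : d + ∑ x ∈ Finset.univ.erase ln, (A x x).re = t :=
    Finset.add_sum_erase _ (fun i => (A i i).re) (Finset.mem_univ ln)
  have hcard : ((Finset.univ.erase ln).card : ℝ) = m := by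
    rw [Finset.card_erase_of_mem (Finset.mem_univ ln), Finset.card_univ, Fintype.card_fin]
    rw [hmdef, Nat.cast_sub (by omega)]
    norm_num
  have hCS : (t - d) ^ 2 ≤ m * q := by
    have h1 : (∑ i ∈ Finset.univ.erase ln, (A i i).re) ^ 2
        ≤ ((Finset.univ.erase ln).card : ℝ)
          * ∑ i ∈ Finset.univ.erase ln, (A i i).re ^ 2 := by
      exact sq_sum_le_card_mul_sum_sq
    rw [hcard, ← hqdef] at h1
    have h2 : t - d = ∑ i ∈ Finset.univ.erase ln, (A i i).re := by linarith
    rw [h2]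
    exact h1
  -- final algebra
  clear_value t d R S q m
  have hden : (0:ℝ) < 80 * m + 144 := by linarith
  have hc : (16 * m + 27) / (80 * m + 144) * (80 * m + 144) = 16 * m + 27 :=
    div_mul_cancel₀ _ hden.ne'
  rw [hd2]
  set c := (16 * m + 27) / (80 * m + 144) with hcdef
  have key : 0 ≤ m * (80 * m + 144)
      * (-9/8 * R + 7/8 * d ^ 2 - 1/2 * t * d + 9/16 * S + c * t ^ 2) := by
    have hId : m * (80 * m + 144)
        * (-9/8 * R + 7/8 * d ^ 2 - 1/2 * t * d + 9/16 * S + c * t ^ 2)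
        = (m * d - (4 * m + 9) * (t - d)) ^ 2
          + 9/16 * (80 * m + 144) * (m * q - (t - d) ^ 2)
          + 9/16 * (m * (80 * m + 144)) * (S - (2 * R - d ^ 2 + q)) := by
      linear_combination (m * t ^ 2) * hc
    rw [hId]
    have hmpos : (0:ℝ) < m := by linarith
    have h1 : (0:ℝ) ≤ (m * d - (4 * m + 9) * (t - d)) ^ 2 := sq_nonneg _
    have h2 : (0:ℝ) ≤ 9/16 * (80 * m + 144) * (m * q - (t - d) ^ 2) := by
      apply mul_nonneg (by linarith); linarith
    have h3 : (0:ℝ) ≤ 9/16 * (m * (80 * m + 144)) * (S - (2 * R - d ^ 2 + q)) := by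
      apply mul_nonneg (mul_nonneg (by norm_num) (mul_pos hmpos hden).le)
      linarith
    linarith
  have hpos : (0:ℝ) < m * (80 * m + 144) := mul_pos (by linarith) hden
  nlinarith [key, hpos]
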